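/- Let S, z : Finset ℂ with (↑z : Set ℂ) ∩ (↑S : Set ℂ) = ∅, and let C be the subtype {w : ℂ // w ∉ S} with the subspace topology. Let G be a topological group which is simply connected (SimplyConnectedSpace G). Then for every continuous map g : C(C, G) such that g c = 1 for every c : C with (c : ℂ) ∈ z, there exists a homotopy relative to the set {c : C | (c : ℂ) ∈ z} between g and the constant map with value 1; that is, Nonempty (ContinuousMap.HomotopyRel g (ContinuousMap.const C 1) {c : C | (c : ℂ) ∈ z}). -/

import Mathlib

open unitInterval Topology

noncomputable section AuxHomotopyRel

/-- circle parametrization -/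
def cexpD (t : ℝ) : ℂ := Complex.exp (((2 * Real.pi * t : ℝ) : ℂ) * Complex.I)

lemma cexpD_cont : Continuous cexpD :=
  Complex.continuous_exp.comp ((Complex.continuous_ofReal.comp (by continuity)).mul continuous_const)

lemma cexpD_abs (t : ℝ) : ‖cexpD t‖ = 1 := Complex.norm_exp_ofReal_mul_I _

lemma cexpD_one : cexpD 1 = cexpD 0 := by
  unfold cexpD
  rw [show (((2 * Real.pi * 1 : ℝ) : ℂ) * Complex.I) = 2 * Real.pi * Complex.I by push_cast; ring]
  rw [Complex.exp_two_pi_mul_I]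
  norm_num

lemma cexpD_eq (t t' : ℝ) (ht : t ∈ Set.Icc (0:ℝ) 1) (ht' : t' ∈ Set.Icc (0:ℝ) 1)
    (h : cexpD t = cexpD t') : t = t' ∨ (t = 0 ∧ t' = 1) ∨ (t = 1 ∧ t' = 0) := by
  have hπ := Real.pi_pos
  obtain ⟨n, hn⟩ := Complex.exp_eq_exp_iff_exists_int.1 h
  have hreal : 2 * Real.pi * t = 2 * Real.pi * t' + n * (2 * Real.pi) := by
    have := congrArg Complex.im hn
    simpa using this
  have htt : t = t' + n := by
    have h2π : (2 * Real.pi : ℝ) ≠ 0 := by positivity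
    apply mul_left_cancel₀ h2π
    rw [hreal]; ring
  obtain ⟨h01, h02⟩ := ht
  obtain ⟨h11, h12⟩ := ht'
  have hn1 : -1 ≤ n := by
    have : (-1 : ℝ) ≤ n := by nlinarith
    exact_mod_cast this
  have hn2 : n ≤ 1 := by
    have : (n : ℝ) ≤ 1 := by nlinarith
    exact_mod_cast this
  interval_cases n
  · right; left
    constructor
    · push_cast at htt; nlinarith
    · push_cast at htt; nlinarith
  · left; push_cast at htt; linarith
  · right; right
    constructor
    · push_cast at htt; nlinarith
    · push_cast at htt; nlinarith

/-- disk parametrization -/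
def sigmaD (s₀ : ℂ) (ε : ℝ) (p : I × I) : ℂ :=
  s₀ + (((1 - (p.1:ℝ)) * ε : ℝ) : ℂ) * cexpD (p.2:ℝ)

lemma sigmaD_cont (s₀ : ℂ) (ε : ℝ) : Continuous (sigmaD s₀ ε) := by
  unfold sigmaD
  apply continuous_const.add
  exact (Complex.continuous_ofReal.comp (by continuity)).mul
    (cexpD_cont.comp (continuous_subtype_val.comp continuous_snd))

lemma sigmaD_abs (s₀ : ℂ) {ε : ℝ} (hε : 0 < ε) (p : I × I) :
    ‖sigmaD s₀ ε p - s₀‖ = (1 - (p.1:ℝ)) * ε := by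
  unfold sigmaD
  rw [add_sub_cancel_left, norm_mul, Complex.norm_real, Real.norm_eq_abs, cexpD_abs, mul_one]
  exact abs_of_nonneg (mul_nonneg (by linarith [p.1.2.2]) hε.le)

lemma sigmaD_surj (s₀ : ℂ) {ε : ℝ} (hε : 0 < ε) (w : ℂ) (hw : ‖w - s₀‖ ≤ ε) :
    ∃ p : I × I, sigmaD s₀ ε p = w := by
  by_cases hw0 : w = s₀
  · refine ⟨(1, 0), ?_⟩
    unfold sigmaD
    simp [hw0]
  · have hπ := Real.pi_pos
    have h2π : (0:ℝ) < 2 * Real.pi := by linarith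
    set r := ‖w - s₀‖ with hr
    have hrpos : 0 < r := norm_pos_iff.2 (sub_ne_zero.2 hw0)
    set a := Complex.arg (w - s₀) with ha
    have hrange1 : -Real.pi < a := Complex.neg_pi_lt_arg _
    have hrange2 : a ≤ Real.pi := Complex.arg_le_pi _
    have hkey : ∃ t : ℝ, 0 ≤ t ∧ t ≤ 1 ∧ cexpD t = Complex.exp ((a:ℂ) * Complex.I) := by
      by_cases h0a : 0 ≤ a
      · refine ⟨a / (2 * Real.pi), by positivity, ?_, ?_⟩
        · rw [div_le_one h2π]; linarith
        · unfold cexpD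
          rw [show (2 * Real.pi * (a / (2 * Real.pi)) : ℝ) = a by field_simp]
      · refine ⟨a / (2 * Real.pi) + 1, ?_, ?_, ?_⟩
        · have : -1 ≤ a / (2 * Real.pi) := by
            rw [le_div_iff₀ h2π]; linarith
          linarith
        · have : a / (2 * Real.pi) ≤ 0 := by
            apply div_nonpos_of_nonpos_of_nonneg <;> linarith [not_le.1 h0a]
          linarith
        · unfold cexpD
          rw [show (2 * Real.pi * (a / (2 * Real.pi) + 1) : ℝ) = a + 2 * Real.pi by field_simp]
          rw [Complex.ofReal_add, add_mul, Complex.exp_add]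
          rw [show (((2 * Real.pi : ℝ) : ℂ) * Complex.I) = 2 * ↑Real.pi * Complex.I by push_cast; ring]
          rw [Complex.exp_two_pi_mul_I, mul_one]
    obtain ⟨t, ht0, ht1, hct⟩ := hkey
    have hu0 : (0:ℝ) ≤ 1 - r / ε := by
      have : r / ε ≤ 1 := (div_le_one hε).2 hw
      linarith
    have hu1 : (1:ℝ) - r / ε ≤ 1 := by
      have : 0 ≤ r / ε := div_nonneg hrpos.le hε.le
      linarith
    refine ⟨(⟨1 - r / ε, hu0, hu1⟩, ⟨t, ht0, ht1⟩), ?_⟩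
    unfold sigmaD
    show s₀ + (((1 - (1 - r / ε)) * ε : ℝ) : ℂ) * cexpD t = w
    rw [show (1 - (1 - r / ε)) * ε = r by field_simp; ring, hct, hr, ha,
      Complex.norm_mul_exp_arg_mul_I]
    ring

lemma sigmaD_fiber (s₀ : ℂ) {ε : ℝ} (hε : 0 < ε) (p q : I × I)
    (h : sigmaD s₀ ε p = sigmaD s₀ ε q) :
    p.1 = q.1 ∧ ((p.1:ℝ) = 1 ∨ p.2 = q.2 ∨ ((p.2:ℝ) = 0 ∧ (q.2:ℝ) = 1) ∨ ((p.2:ℝ) = 1 ∧ (q.2:ℝ) = 0)) := by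
  have habs' : (1 - (p.1:ℝ)) * ε = (1 - (q.1:ℝ)) * ε := by
    rw [← sigmaD_abs s₀ hε p, ← sigmaD_abs s₀ hε q, h]
  have huR : (p.1:ℝ) = (q.1:ℝ) := by
    have := mul_right_cancel₀ hε.ne' habs'
    linarith
  refine ⟨Subtype.ext huR, ?_⟩
  by_cases h1 : (p.1 : ℝ) = 1
  · exact Or.inl h1
  · right
    have hcoefne : (((1 - (p.1:ℝ)) * ε : ℝ) : ℂ) ≠ 0 := by
      rw [Complex.ofReal_ne_zero]
      have h1' : (p.1:ℝ) < 1 := lt_of_le_of_ne p.1.2.2 h1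
      exact mul_ne_zero (by linarith) hε.ne'
    have hcc : cexpD (p.2:ℝ) = cexpD (q.2:ℝ) := by
      unfold sigmaD at h
      rw [← huR] at h
      exact mul_left_cancel₀ hcoefne (add_left_cancel h)
    rcases cexpD_eq _ _ p.2.2 q.2.2 hcc with h' | h' | h'
    · exact Or.inl (Subtype.ext h')
    · exact Or.inr (Or.inl h')
    · exact Or.inr (Or.inr h')

lemma relUpgrade {X : Type*} [MetricSpace X] {G : Type*} [TopologicalSpace G] [Group G]
    [IsTopologicalGroup G] [SimplyConnectedSpace G] (g : C(X, G)) (T : Finset X)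
    (hgT : ∀ c ∈ T, g c = 1)
    (hfree : Nonempty (ContinuousMap.Homotopy g (ContinuousMap.const X 1))) :
    Nonempty (ContinuousMap.HomotopyRel g (ContinuousMap.const X 1) ↑T) := by
  classical
  induction T using Finset.induction_on with
  | empty =>
    obtain ⟨K⟩ := hfree
    exact ⟨{ toContinuousMap := K.toContinuousMap
             map_zero_left := K.map_zero_left
             map_one_left := K.map_one_left
             prop' := fun t x hx => absurd hx (by simp) }⟩
  | @insert c T' hc IH =>
    obtain ⟨H⟩ := IH (fun c' hc' => hgT c' (Finset.mem_insert_of_mem hc'))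
    -- a positive δ below the distance from c to all points of T'
    obtain ⟨δ, hδpos, hδ⟩ : ∃ δ : ℝ, 0 < δ ∧ ∀ c' ∈ T', δ ≤ dist c' c := by
      rcases T'.eq_empty_or_nonempty with h | h
      · exact ⟨1, one_pos, by simp [h]⟩
      · refine ⟨(T'.image fun c' => dist c' c).min' (h.image _), ?_, ?_⟩
        · obtain ⟨c', hc', hval⟩ := Finset.mem_image.1 ((T'.image fun c' => dist c' c).min'_mem (h.image _))
          rw [← hval]
          exact dist_pos.2 fun hcc => hc (hcc ▸ hc')
        · exact fun c' hc' => Finset.min'_le _ _ (Finset.mem_image_of_mem _ hc')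
    set χ : X → I := fun x => Set.projIcc 0 1 zero_le_one (dist x c / δ) with hχ
    have hχcont : Continuous χ := continuous_projIcc.comp ((continuous_id.dist continuous_const).div_const δ)
    have hχc : χ c = 0 := by
      apply Subtype.ext
      simp [hχ, Set.coe_projIcc]
    have hχT' : ∀ c' ∈ T', χ c' = 1 := by
      intro c' hc'
      apply Subtype.ext
      have h1 : (1:ℝ) ≤ dist c' c / δ := (one_le_div hδpos).2 (hδ c' hc')
      rw [Set.coe_projIcc, inf_eq_left.2 h1]
      simp
    have hgc : g c = 1 := hgT c (Finset.mem_insert_self _ _)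
    set γ : Path (1 : G) 1 :=
      { toFun := fun t => H (t, c)
        continuous_toFun := H.continuous.comp (continuous_id.prodMk continuous_const)
        source' := by show H (0, c) = 1; rw [H.apply_zero]; exact hgc
        target' := by show H (1, c) = 1; rw [H.apply_one]; rfl } with hγ
    obtain ⟨F⟩ := SimplyConnectedSpace.paths_homotopic γ (Path.refl 1)
    refine ⟨{ toFun := fun p => H p * (F (χ p.2, p.1))⁻¹
              continuous_toFun := ?_
              map_zero_left := ?_
              map_one_left := ?_
              prop' := ?_ }⟩
    · exact H.continuous.mul ((F.continuous.comp
        ((hχcont.comp continuous_snd).prodMk continuous_fst)).inv)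
    · intro x
      have : F (χ x, 0) = 1 := F.source (χ x)
      simp only [this, inv_one, mul_one]
      exact H.apply_zero x
    · intro x
      have : F (χ x, 1) = 1 := F.target (χ x)
      simp only [this, inv_one, mul_one]
      exact H.apply_one x
    · intro t x hx
      rcases Finset.mem_insert.1 hx with rfl | hx'
      · have h1 : H (t, x) = γ t := rfl
        have h2 : F (χ x, t) = γ t := by rw [hχc]; exact F.map_zero_left t
        show H (t, x) * (F (χ x, t))⁻¹ = g x
        rw [h1, h2, mul_inv_cancel, hgc]
      · have h1 : H (t, x) = g x := H.eq_fst t (by exact_mod_cast hx')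
        have h2 : F (χ x, t) = 1 := by rw [hχT' x hx']; exact F.map_one_left t
        show H (t, x) * (F (χ x, t))⁻¹ = g x
        rw [h1, h2, inv_one, mul_one]

lemma freeNull (S : Finset ℂ) {G : Type*} [TopologicalSpace G] [Group G]
    [IsTopologicalGroup G] [SimplyConnectedSpace G] :
    ∀ g : C({w : ℂ // w ∉ S}, G), Nonempty (g.Homotopy (ContinuousMap.const _ 1)) := by
  classical
  induction S using Finset.induction_on with
  | empty =>
    intro g
    have h0 : ((0:ℂ) ∉ (∅ : Finset ℂ)) := Finset.notMem_empty _
    obtain ⟨q⟩ : Joined (1 : G) ((g ⟨0, h0⟩)⁻¹) := PathConnectedSpace.joined _ _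
    refine ⟨{ toFun := fun p => g ⟨((1 - (p.1:ℝ) : ℝ) : ℂ) * (p.2 : ℂ), Finset.notMem_empty _⟩ * q p.1
              continuous_toFun := ?_
              map_zero_left := ?_
              map_one_left := ?_ }⟩
    · refine Continuous.mul ?_ (q.continuous.comp continuous_fst)
      refine g.continuous.comp (Continuous.subtype_mk ?_ _)
      exact (Complex.continuous_ofReal.comp ((continuous_const.sub continuous_subtype_val).comp continuous_fst)).mul
        (continuous_subtype_val.comp continuous_snd)
    · intro x
      have h1 : (⟨((1 - ((0:I):ℝ) : ℝ) : ℂ) * (x : ℂ), Finset.notMem_empty _⟩ : {w : ℂ // w ∉ (∅ : Finset ℂ)}) = x := by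
        apply Subtype.ext; simp
      change g _ * q 0 = g x
      rw [h1]
      simp [q.source]
    · intro x
      have h1 : (⟨((1 - ((1:I):ℝ) : ℝ) : ℂ) * (x : ℂ), Finset.notMem_empty _⟩ : {w : ℂ // w ∉ (∅ : Finset ℂ)}) = (⟨0, Finset.notMem_empty _⟩ : {w : ℂ // w ∉ (∅ : Finset ℂ)}) := by
        apply Subtype.ext; simp
      change g _ * q 1 = _
      rw [h1]
      simp [q.target]
  | @insert s₀ S' hs IH =>
    intro g
    obtain ⟨ε, hεpos, hεS'⟩ : ∃ ε : ℝ, 0 < ε ∧ ∀ w ∈ S', ε < dist w s₀ := by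
      rcases S'.eq_empty_or_nonempty with h | h
      · exact ⟨1, one_pos, by simp [h]⟩
      · refine ⟨(S'.image fun w => dist w s₀).min' (h.image _) / 2, ?_, ?_⟩
        · have hmem := Finset.min'_mem (S'.image fun w => dist w s₀) (h.image _)
          obtain ⟨w, hw, hval⟩ := Finset.mem_image.1 hmem
          have : (0:ℝ) < (S'.image fun w => dist w s₀).min' (h.image _) := by
            rw [← hval]; exact dist_pos.2 fun hww => hs (hww ▸ hw)
          linarith
        · intro w hw
          have h1 : (S'.image fun w => dist w s₀).min' (h.image _) ≤ dist w s₀ :=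
            Finset.min'_le _ _ (Finset.mem_image_of_mem _ hw)
          have : (0:ℝ) < (S'.image fun w => dist w s₀).min' (h.image _) := by
            obtain ⟨w', hw', hval⟩ := Finset.mem_image.1
              (Finset.min'_mem (S'.image fun w => dist w s₀) (h.image _))
            rw [← hval]; exact dist_pos.2 fun hww => hs (hww ▸ hw')
          linarith
    have hball : ∀ w : ℂ, dist w s₀ ≤ ε → w ∉ S' := fun w hw hwS => absurd hw (not_le.2 (hεS' w hwS))
    have hcircX : ∀ t : I, sigmaD s₀ ε (0, t) ∉ insert s₀ S' := by
      intro t hmem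
      have h1 : ‖sigmaD s₀ ε (0, t) - s₀‖ = ε := by
        rw [sigmaD_abs s₀ hεpos]; simp
      rcases Finset.mem_insert.1 hmem with h | h
      · rw [h, sub_self, norm_zero] at h1; exact hεpos.ne' h1.symm
      · exact hball _ (le_of_eq (by rw [Complex.dist_eq, h1])) h
    -- the boundary loop
    set lp : Path (g ⟨sigmaD s₀ ε (0,0), hcircX 0⟩) (g ⟨sigmaD s₀ ε (0,0), hcircX 0⟩) :=
      { toFun := fun t => g ⟨sigmaD s₀ ε (0, t), hcircX t⟩
        continuous_toFun := g.continuous.comp (Continuous.subtype_mk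
          ((sigmaD_cont s₀ ε).comp (continuous_const.prodMk continuous_id)) _)
        source' := rfl
        target' := by
          show g ⟨sigmaD s₀ ε (0,1), hcircX 1⟩ = g ⟨sigmaD s₀ ε (0,0), hcircX 0⟩
          refine congrArg g (Subtype.ext ?_)
          show sigmaD s₀ ε (0,1) = sigmaD s₀ ε (0,0)
          unfold sigmaD
          rw [show ((1:I):ℝ) = (1:ℝ) from rfl, show ((0:I):ℝ) = (0:ℝ) from rfl, cexpD_one] } with hlp
    obtain ⟨F⟩ := SimplyConnectedSpace.paths_homotopic lp (Path.refl _)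
    -- quotient construction of the disk filling
    have hmemD : ∀ p : I × I, sigmaD s₀ ε p ∈ Metric.closedBall s₀ ε := by
      intro p
      rw [Metric.mem_closedBall, Complex.dist_eq, sigmaD_abs s₀ hεpos]
      nlinarith [p.1.2.1, p.1.2.2, hεpos.le]
    set e : I × I → (Metric.closedBall s₀ ε : Set ℂ) := fun p => ⟨sigmaD s₀ ε p, hmemD p⟩ with he
    have econt : Continuous e := Continuous.subtype_mk (sigmaD_cont s₀ ε) _
    have esurj : Function.Surjective e := by
      rintro ⟨w, hw⟩
      obtain ⟨p, hp⟩ := sigmaD_surj s₀ hεpos w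
        (by rw [← Complex.dist_eq]; exact Metric.mem_closedBall.1 hw)
      exact ⟨p, Subtype.ext hp⟩
    have equot : IsQuotientMap e := (econt.isClosedMap).isQuotientMap econt esurj
    have hF01 : ∀ u u' : I, F (u, 1) = F (u', 0) := by
      intro u u'
      rw [Path.Homotopy.target, Path.Homotopy.source]
    have econst : ∀ p q : I × I, e p = e q → F p = F q := by
      intro p q hpq
      obtain ⟨hu, hrest⟩ := sigmaD_fiber s₀ hεpos p q (congrArg Subtype.val hpq)
      rcases hrest with h1 | h2 | h3 | h4
      · have hp : p = (1, p.2) := Prod.ext (Subtype.ext h1) rfl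
        have hq : q = (1, q.2) := Prod.ext (Subtype.ext ((congrArg (Subtype.val) hu) ▸ h1)) rfl
        rw [hp, hq, F.apply_one, F.apply_one]
        rfl
      · rw [show p = (p.1, p.2) from rfl, hu, h2]
      · have hp2 : p.2 = 0 := Subtype.ext h3.1
        have hq2 : q.2 = 1 := Subtype.ext h3.2
        rw [show p = (p.1, p.2) from rfl, hp2, hu, show q = (q.1, q.2) from rfl, hq2]
        exact (hF01 q.1 q.1).symm
      · have hp2 : p.2 = 1 := Subtype.ext h4.1
        have hq2 : q.2 = 0 := Subtype.ext h4.2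
        rw [show p = (p.1, p.2) from rfl, hp2, hu, show q = (q.1, q.2) from rfl, hq2]
        exact hF01 q.1 q.1
    set φ : ↥(Metric.closedBall s₀ ε) → G := ⇑F ∘ Function.surjInv esurj with hφ
    have φcont : Continuous φ := by
      rw [equot.continuous_iff]
      have : φ ∘ e = F := funext fun p => econst _ _ (Function.surjInv_eq esurj (e p))
      rw [this]
      exact F.continuous
    have φbd : ∀ (w : ℂ) (hw : w ∈ Metric.closedBall s₀ ε) (hw' : w ∉ insert s₀ S'),
        ‖w - s₀‖ = ε → φ ⟨w, hw⟩ = g ⟨w, hw'⟩ := by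
      intro w hw hw' hwε
      set p := Function.surjInv esurj ⟨w, hw⟩ with hp
      have hep : e p = ⟨w, hw⟩ := Function.surjInv_eq esurj _
      have hσp : sigmaD s₀ ε p = w := congrArg Subtype.val hep
      have habsp : (1 - (p.1:ℝ)) * ε = ε := by rw [← sigmaD_abs s₀ hεpos p, hσp, hwε]
      have hu : p.1 = 0 := by
        apply Subtype.ext
        have h2 : (1 - (p.1:ℝ)) = 1 := by
          have := mul_right_cancel₀ hεpos.ne' (habsp.trans (one_mul ε).symm)
          linarith
        show (p.1:ℝ) = 0
        linarith
      have hpp : p = (0, p.2) := Prod.ext hu rfl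
      show F p = g ⟨w, hw'⟩
      rw [hpp, F.apply_zero]
      show g ⟨sigmaD s₀ ε (0, p.2), hcircX p.2⟩ = g ⟨w, hw'⟩
      refine congrArg g (Subtype.ext ?_)
      show sigmaD s₀ ε (0, p.2) = w
      rw [← hpp, hσp]
    -- clamp map onto the closed ball
    have hmaxpos : ∀ x : {w : ℂ // w ∉ S'}, (0:ℝ) < max ε (dist (x:ℂ) s₀) :=
      fun x => lt_max_of_lt_left hεpos
    have hclampmem : ∀ x : {w : ℂ // w ∉ S'},
        s₀ + ((x:ℂ) - s₀) * ((ε / max ε (dist (x:ℂ) s₀) : ℝ) : ℂ) ∈ Metric.closedBall s₀ ε := by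
      intro x
      rw [Metric.mem_closedBall, Complex.dist_eq, add_sub_cancel_left, norm_mul, Complex.norm_real, Real.norm_eq_abs,
        abs_of_nonneg (div_nonneg hεpos.le (hmaxpos x).le)]
      rw [← Complex.dist_eq, ← mul_div_assoc, div_le_iff₀ (hmaxpos x)]
      have h1 : dist (x:ℂ) s₀ ≤ max ε (dist (x:ℂ) s₀) := le_max_right _ _
      nlinarith [dist_nonneg (x := (x:ℂ)) (y := s₀), hεpos.le]
    set clamp : {w : ℂ // w ∉ S'} → ↥(Metric.closedBall s₀ ε) := fun x =>
      ⟨s₀ + ((x:ℂ) - s₀) * ((ε / max ε (dist (x:ℂ) s₀) : ℝ) : ℂ), hclampmem x⟩ with hclamp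
    have clampcont : Continuous clamp := by
      apply Continuous.subtype_mk
      apply continuous_const.add
      apply Continuous.mul (continuous_subtype_val.sub continuous_const)
      apply Complex.continuous_ofReal.comp
      exact continuous_const.div (continuous_const.max (continuous_subtype_val.dist continuous_const))
        (fun x => (hmaxpos x).ne')
    have hclampid : ∀ x : {w : ℂ // w ∉ S'}, dist (x:ℂ) s₀ ≤ ε → ((clamp x : ℂ)) = (x:ℂ) := by
      intro x hx
      show s₀ + ((x:ℂ) - s₀) * ((ε / max ε (dist (x:ℂ) s₀) : ℝ) : ℂ) = (x:ℂ)
      rw [max_eq_left hx, div_self hεpos.ne']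
      push_cast
      ring
    -- the capped map g' on ℂ ∖ S'
    have hnotmem : ∀ x : {w : ℂ // w ∉ S'}, ¬ dist (x:ℂ) s₀ ≤ ε → (x:ℂ) ∉ insert s₀ S' := by
      intro x hx hmem
      rcases Finset.mem_insert.1 hmem with h0 | h0
      · exact hx (by rw [h0, dist_self]; exact hεpos.le)
      · exact x.2 h0
    set g' : {w : ℂ // w ∉ S'} → G := fun x =>
      if h : dist (x:ℂ) s₀ ≤ ε then φ (clamp x) else g ⟨(x:ℂ), hnotmem x h⟩ with hg'
    have hg'bd : ∀ (w : ℂ) (hw : w ∉ S') (hw' : w ∉ insert s₀ S'), ε ≤ dist w s₀ →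
        g' ⟨w, hw⟩ = g ⟨w, hw'⟩ := by
      intro w hw hw' hd
      by_cases hle : dist w s₀ ≤ ε
      · have heq : dist w s₀ = ε := le_antisymm hle hd
        have hcl : clamp ⟨w, hw⟩ = ⟨w, by rw [Metric.mem_closedBall]; exact hle⟩ :=
          Subtype.ext (hclampid ⟨w, hw⟩ hle)
        show (if h : dist w s₀ ≤ ε then φ (clamp ⟨w, hw⟩) else _) = _
        rw [dif_pos hle, hcl]
        exact φbd w _ hw' (by rw [← Complex.dist_eq, heq])
      · show (if h : dist w s₀ ≤ ε then φ (clamp ⟨w, hw⟩) else _) = _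
        rw [dif_neg hle]
    have g'cont : Continuous g' := by
      have hAclosed : IsClosed {x : {w : ℂ // w ∉ S'} | dist (x:ℂ) s₀ ≤ ε} :=
        isClosed_le (continuous_subtype_val.dist continuous_const) continuous_const
      have hBclosed : IsClosed {x : {w : ℂ // w ∉ S'} | ε ≤ dist (x:ℂ) s₀} :=
        isClosed_le continuous_const (continuous_subtype_val.dist continuous_const)
      have contA : ContinuousOn g' {x | dist (x:ℂ) s₀ ≤ ε} := by
        apply ContinuousOn.congr ((φcont.comp clampcont).continuousOn)
        intro x hx
        show g' x = φ (clamp x)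
        rw [hg']
        exact dif_pos hx
      have contB : ContinuousOn g' {x | ε ≤ dist (x:ℂ) s₀} := by
        rw [continuousOn_iff_continuous_restrict]
        have : {x : {w : ℂ // w ∉ S'} | ε ≤ dist (x:ℂ) s₀}.domRestrict g' =
            (fun y : {x : {w : ℂ // w ∉ S'} // ε ≤ dist (x:ℂ) s₀} =>
              g ⟨((y : {w : ℂ // w ∉ S'}) : ℂ), by
                intro hmem
                rcases Finset.mem_insert.1 hmem with h0 | h0
                · have := y.2
                  rw [h0] at this
                  simp only [Set.mem_setOf_eq, dist_self] at this
                  exact absurd this (not_le.2 hεpos)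
                · exact (y : {w : ℂ // w ∉ S'}).2 h0⟩) := by
          funext y
          exact hg'bd _ _ _ y.2
        rw [this]
        exact g.continuous.comp (Continuous.subtype_mk
          (continuous_subtype_val.comp continuous_subtype_val) _)
      rw [continuous_iff_continuousAt]
      intro x
      rw [← continuousWithinAt_univ]
      have huniv : (Set.univ : Set {w : ℂ // w ∉ S'}) =
          {x : {w : ℂ // w ∉ S'} | dist (x:ℂ) s₀ ≤ ε} ∪ {x : {w : ℂ // w ∉ S'} | ε ≤ dist (x:ℂ) s₀} := by
        ext y; simp [le_total]
      rw [huniv]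
      have hA : ContinuousWithinAt g' {x | dist (x:ℂ) s₀ ≤ ε} x := by
        by_cases hx : x ∈ {x : {w : ℂ // w ∉ S'} | dist (x:ℂ) s₀ ≤ ε}
        · exact contA x hx
        · exact continuousWithinAt_of_notMem_closure (by rwa [hAclosed.closure_eq])
      have hB : ContinuousWithinAt g' {x | ε ≤ dist (x:ℂ) s₀} x := by
        by_cases hx : x ∈ {x : {w : ℂ // w ∉ S'} | ε ≤ dist (x:ℂ) s₀}
        · exact contB x hx
        · exact continuousWithinAt_of_notMem_closure (by rwa [hBclosed.closure_eq])
      exact hA.union hB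
    -- apply the induction hypothesis to g'
    obtain ⟨K'⟩ := IH ⟨g', g'cont⟩
    set ι : {w : ℂ // w ∉ insert s₀ S'} → {w : ℂ // w ∉ S'} :=
      fun x => ⟨(x:ℂ), fun h => x.2 (Finset.mem_insert_of_mem h)⟩ with hι
    have ιcont : Continuous ι := Continuous.subtype_mk continuous_subtype_val _
    set hm : {w : ℂ // w ∉ insert s₀ S'} → G := fun x => (g' (ι x))⁻¹ * g x with hhm
    have hmcont : Continuous hm :=
      ((g'cont.comp ιcont).inv).mul g.continuous
    have hmsupp : ∀ x : {w : ℂ // w ∉ insert s₀ S'}, ε ≤ dist (x:ℂ) s₀ → hm x = 1 := by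
      intro x hx
      show (g' (ι x))⁻¹ * g x = 1
      have : g' (ι x) = g x := by
        have := hg'bd (x:ℂ) (fun h => x.2 (Finset.mem_insert_of_mem h)) x.2 hx
        rw [hι]
        convert this using 3
      rw [this, inv_mul_cancel]
    -- the radial push
    have hdpos : ∀ x : {w : ℂ // w ∉ insert s₀ S'}, 0 < dist (x:ℂ) s₀ := by
      intro x
      rw [dist_pos]
      intro h
      exact x.2 (by rw [h]; exact Finset.mem_insert_self s₀ S')
    have hρ1 : ∀ p : I × {w : ℂ // w ∉ insert s₀ S'},
        1 ≤ (1 - (p.1:ℝ)) + (p.1:ℝ) * (max (dist ((p.2:ℂ)) s₀) ε / dist ((p.2:ℂ)) s₀) := by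
      intro p
      have h1 : 1 ≤ max (dist ((p.2:ℂ)) s₀) ε / dist ((p.2:ℂ)) s₀ :=
        (one_le_div (hdpos p.2)).2 (le_max_left _ _)
      nlinarith [p.1.2.1, p.1.2.2]
    have hPmem : ∀ p : I × {w : ℂ // w ∉ insert s₀ S'},
        s₀ + ((p.2:ℂ) - s₀) * ((((1 - (p.1:ℝ)) + (p.1:ℝ) * (max (dist ((p.2:ℂ)) s₀) ε / dist ((p.2:ℂ)) s₀)) : ℝ) : ℂ)
          ∉ insert s₀ S' := by
      intro p hmem
      set d := dist ((p.2:ℂ)) s₀ with hd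
      set ρ := (1 - (p.1:ℝ)) + (p.1:ℝ) * (max d ε / d) with hρ
      have hdposp : 0 < d := hdpos p.2
      have hρ1p : 1 ≤ ρ := hρ1 p
      have habsP : ‖(s₀ + ((p.2:ℂ) - s₀) * ((ρ:ℝ):ℂ)) - s₀‖ = d * ρ := by
        rw [add_sub_cancel_left, norm_mul, Complex.norm_real, Real.norm_eq_abs, ← Complex.dist_eq, ← hd,
          abs_of_nonneg (by nlinarith)]
      have hdρ : d * ρ ≤ max d ε := by
        rw [hρ]
        have h2 : d * ((1 - (p.1:ℝ)) + (p.1:ℝ) * (max d ε / d)) =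
            (1 - (p.1:ℝ)) * d + (p.1:ℝ) * (max d ε) := by
          field_simp
        rw [h2]
        have h3 : d ≤ max d ε := le_max_left _ _
        nlinarith [p.1.2.1, p.1.2.2]
      have hdρpos : 0 < d * ρ := by nlinarith
      rcases Finset.mem_insert.1 hmem with h0 | h0
      · rw [h0, sub_self, norm_zero] at habsP
        exact hdρpos.ne' habsP.symm
      · -- in S' : contradiction
        by_cases hcase : ε ≤ d
        · -- then max = d and ρ = 1, so the point is p.2 itself
          have hmax : max d ε = d := max_eq_left hcase
          have hρeq : ρ = 1 := by rw [hρ, hmax, div_self (hdpos p.2).ne']; ring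
          have : s₀ + ((p.2:ℂ) - s₀) * ((ρ:ℝ):ℂ) = (p.2:ℂ) := by rw [hρeq]; push_cast; ring
          rw [this] at h0
          exact p.2.2 (Finset.mem_insert_of_mem h0)
        · have hmax : max d ε = ε := max_eq_right (le_of_not_ge hcase)
          apply hball _ _ h0
          rw [Complex.dist_eq, habsP, ← hmax]
          exact hdρ
    set P : I × {w : ℂ // w ∉ insert s₀ S'} → {w : ℂ // w ∉ insert s₀ S'} := fun p =>
      ⟨s₀ + ((p.2:ℂ) - s₀) * ((((1 - (p.1:ℝ)) + (p.1:ℝ) * (max (dist ((p.2:ℂ)) s₀) ε / dist ((p.2:ℂ)) s₀)) : ℝ) : ℂ),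
        hPmem p⟩ with hP
    have Pcont : Continuous P := by
      apply Continuous.subtype_mk
      apply continuous_const.add
      apply Continuous.mul ((continuous_subtype_val.comp continuous_snd).sub continuous_const)
      apply Complex.continuous_ofReal.comp
      have hdcont : Continuous fun p : I × {w : ℂ // w ∉ insert s₀ S'} => dist ((p.2:ℂ)) s₀ :=
        ((continuous_subtype_val.comp continuous_snd).dist continuous_const)
      apply Continuous.add
      · exact continuous_const.sub (continuous_subtype_val.comp continuous_fst)
      · exact (continuous_subtype_val.comp continuous_fst).mul
          ((hdcont.max continuous_const).div hdcont (fun p => (hdpos p.2).ne'))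
    have hP0 : ∀ x, P (0, x) = x := by
      intro x
      apply Subtype.ext
      show s₀ + ((x:ℂ) - s₀) * _ = (x:ℂ)
      rw [show ((0:I):ℝ) = (0:ℝ) from rfl]
      push_cast
      ring
    have hP1 : ∀ x, ε ≤ dist ((P (1, x) : ℂ)) s₀ := by
      intro x
      show ε ≤ dist (s₀ + ((x:ℂ) - s₀) *
        ((((1 - ((1:I):ℝ)) + ((1:I):ℝ) * (max (dist ((x:ℂ)) s₀) ε / dist ((x:ℂ)) s₀)) : ℝ) : ℂ)) s₀
      have hρeq : (1 - ((1:I):ℝ)) + ((1:I):ℝ) * (max (dist ((x:ℂ)) s₀) ε / dist ((x:ℂ)) s₀)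
          = max (dist ((x:ℂ)) s₀) ε / dist ((x:ℂ)) s₀ := by
        rw [show ((1:I):ℝ) = (1:ℝ) from rfl]; ring
      rw [hρeq, Complex.dist_eq, add_sub_cancel_left, norm_mul, Complex.norm_real, Real.norm_eq_abs, ← Complex.dist_eq,
        abs_of_nonneg (div_nonneg (le_max_of_le_left dist_nonneg) dist_nonneg)]
      have hdd : dist ((x:ℂ)) s₀ * (max (dist ((x:ℂ)) s₀) ε / dist ((x:ℂ)) s₀)
          = max (dist ((x:ℂ)) s₀) ε := by
        rw [mul_comm]
        exact div_mul_cancel₀ _ (hdpos x).ne'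
      rw [hdd]
      exact le_max_right _ _
    refine ⟨{ toFun := fun p => K' (p.1, ι p.2) * hm (P p)
              continuous_toFun := ?_
              map_zero_left := ?_
              map_one_left := ?_ }⟩
    · exact (K'.continuous.comp ((continuous_fst).prodMk (ιcont.comp continuous_snd))).mul
        (hmcont.comp Pcont)
    · intro x
      show K' (0, ι x) * hm (P (0, x)) = g x
      rw [K'.apply_zero, hP0]
      show g' (ι x) * ((g' (ι x))⁻¹ * g x) = g x
      rw [mul_inv_cancel_left]
    · intro x
      show K' (1, ι x) * hm (P (1, x)) = _
      rw [K'.apply_one, hmsupp _ (hP1 x), mul_one]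
      rfl


end AuxHomotopyRel

/-- Lemma 2.8: for a simply connected topological group `G` and `C = ℂ ∖ S`,
every continuous map `C → G` sending the finite set `z` (disjoint from `S`) to the identity
is homotopic to the constant map `1` relative to `z`. -/
theorem homotopyRel_to_const_of_simplyConnected (S z : Finset ℂ)
    (hdisj : (↑z : Set ℂ) ∩ (↑S : Set ℂ) = ∅)
    {G : Type*} [TopologicalSpace G] [Group G] [IsTopologicalGroup G] [SimplyConnectedSpace G]
    (g : C({w : ℂ // w ∉ S}, G)) (hg : ∀ c : {w : ℂ // w ∉ S}, (c : ℂ) ∈ z → g c = 1) :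
    Nonempty (ContinuousMap.HomotopyRel g (ContinuousMap.const {w : ℂ // w ∉ S} 1)
      {c : {w : ℂ // w ∉ S} | (c : ℂ) ∈ z}) := by
  classical
  have hT : ({c : {w : ℂ // w ∉ S} | (c : ℂ) ∈ z} : Set {w : ℂ // w ∉ S}) =
      ↑(z.preimage (Subtype.val : {w : ℂ // w ∉ S} → ℂ) (Subtype.coe_injective.injOn)) := by
    ext c
    simp [Finset.mem_preimage]
  rw [hT]
  exact relUpgrade g _ (fun c hc => hg c (Finset.mem_preimage.1 hc)) (freeNull S g)
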